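/- arXiv:2003.05216 — 2 statements merged into one kernel-verified Lean document; each statement's English description precedes it below -/
import Mathlib

section
/- Let u : ℝ → ℝ be continuously differentiable with compact support. Then the Lebesgue measure (in ℝ²) of the set {(x,y) ∈ ℝ × ℝ : |u(x) - u(y)| ≥ |x - y|²} is at most C ∫_ℝ |u'(t)| dt, where C is a universal constant (independent of u). -/
open MeasureTheory

section DyadicCZ

open Set

noncomputable def DI (k n : ℤ) : Set ℝ := Set.Ico (n * 2^k) ((n+1) * (2:ℝ)^k)

lemma mem_DI {k n : ℤ} {x : ℝ} : x ∈ DI k n ↔ ⌊x / (2:ℝ)^k⌋ = n := by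
  have h2 : (0:ℝ) < 2^k := zpow_pos (by norm_num) k
  rw [Int.floor_eq_iff, DI]
  constructor
  · rintro ⟨h1, h2'⟩
    refine ⟨by rw [le_div_iff₀ h2]; linarith, by rw [div_lt_iff₀ h2]; push_cast at h2' ⊢; linarith⟩
  · rintro ⟨h1, h2'⟩
    rw [le_div_iff₀ h2] at h1
    rw [div_lt_iff₀ h2] at h2'
    exact ⟨by linarith, by push_cast at h2' ⊢; linarith⟩

lemma DI_subset {k k' n n' : ℤ} (hk : k ≤ k') (h : (DI k n ∩ DI k' n').Nonempty) :
    DI k n ⊆ DI k' n' := by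
  obtain ⟨x, hx1, hx2⟩ := h
  set d : ℕ := (k' - k).toNat with hd
  have hdk : k' = k + d := by simp [hd]; omega
  set q : ℤ := n / 2^d with hq
  set r : ℤ := n % 2^d with hr
  have h2d : (0:ℤ) < 2^d := by positivity
  have hnq : q * 2^d + r = n := by
    rw [hq, hr]; linarith [Int.mul_ediv_add_emod n (2^d)]
  have hr0 : 0 ≤ r := Int.emod_nonneg n (by positivity)
  have hrlt : r < 2^d := Int.emod_lt_of_pos n h2d
  have hqn : q * 2^d ≤ n := by linarith
  have hqn2 : n + 1 ≤ (q+1) * 2^d := by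
    have expand : (q+1)*2^d = q*2^d + 2^d := by ring
    linarith
  have key : ∀ z ∈ DI k n, ⌊z / (2:ℝ)^k'⌋ = q := by
    intro z hz
    have h2k : (0:ℝ) < 2^k := zpow_pos (by norm_num) k
    have h2k' : (0:ℝ) < 2^k' := zpow_pos (by norm_num) k'
    obtain ⟨hz1, hz2⟩ := hz
    have hsplit : (2:ℝ)^k' = 2^k * 2^d := by
      rw [hdk, zpow_add₀ (by norm_num : (2:ℝ) ≠ 0)]; norm_num
    have hqnR : (q:ℝ) * 2^d ≤ (n:ℝ) := by exact_mod_cast hqn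
    have hqn2R : (n:ℝ) + 1 ≤ ((q:ℝ)+1) * 2^d := by exact_mod_cast hqn2
    rw [Int.floor_eq_iff]
    constructor
    · rw [le_div_iff₀ h2k', hsplit]
      calc (q:ℝ) * (2^k * 2^d) = ((q:ℝ) * 2^d) * 2^k := by ring
        _ ≤ (n:ℝ) * 2^k := by nlinarith
        _ ≤ z := hz1
    · rw [div_lt_iff₀ h2k', hsplit]
      have hz2' : z < ((n:ℝ)+1) * 2^k := by push_cast at hz2; linarith
      calc z < ((n:ℝ)+1) * 2^k := hz2'
        _ ≤ (((q:ℝ)+1) * 2^d) * 2^k := by nlinarith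
        _ = ((q:ℝ)+1) * (2^k * 2^d) := by ring
  have hq' : q = n' := by
    have h1 := key x hx1
    rw [mem_DI] at hx2
    omega
  intro z hz
  rw [mem_DI, key z hz, hq']

noncomputable def Sel (g : ℝ → ℝ) (k n : ℤ) : Prop :=
  ((2:ℝ)^k)^2 / 8 ≤ ∫ t in DI k n, g t

noncomputable def MaxSel (g : ℝ → ℝ) (k n : ℤ) : Prop :=
  Sel g k n ∧ ∀ k' n', k < k' → DI k n ⊆ DI k' n' → ¬ Sel g k' n'

lemma DI_nonempty (k n : ℤ) : (DI k n).Nonempty := by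
  have h2 : (0:ℝ) < 2^k := zpow_pos (by norm_num) k
  exact ⟨n * 2^k, le_refl _, by nlinarith⟩

lemma exists_maxSel {g : ℝ → ℝ} (hg : Integrable g) (hg0 : 0 ≤ᶠ[ae volume] g)
    {k n : ℤ} (h : Sel g k n) :
    ∃ k' n', k ≤ k' ∧ DI k n ⊆ DI k' n' ∧ MaxSel g k' n' := by
  set M : ℝ := ∫ t, g t with hM
  -- any selected scale k' satisfies (2^k')^2/8 ≤ M
  have hbd : ∀ k' n' : ℤ, Sel g k' n' → ((2:ℝ)^k')^2 ≤ 8 * M := by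
    intro k' n' hs
    have := setIntegral_le_integral hg hg0 (s := DI k' n')
    rw [Sel] at hs
    linarith
  obtain ⟨N, hN⟩ := exists_nat_gt (8 * M)
  have hscale_bd : ∀ k' n' : ℤ, Sel g k' n' → k' ≤ N := by
    intro k' n' hs
    by_contra hlt
    push_neg at hlt
    have h1 : ((2:ℝ))^(N:ℤ) ≤ (2:ℝ)^k' := zpow_le_zpow_right₀ (by norm_num) hlt.le
    have h2 : (N:ℝ) ≤ (2:ℝ)^(N:ℤ) := by
      rw [zpow_natCast]
      calc (N:ℝ) ≤ 2^N := by exact_mod_cast Nat.le_of_lt (Nat.lt_two_pow_self (n := N))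
        _ = (2:ℝ)^N := by norm_num
    have h3 := hbd k' n' hs
    have h4 : (1:ℝ) ≤ (2:ℝ)^k' := by
      have : ((2:ℝ))^(0:ℤ) ≤ (2:ℝ)^k' := zpow_le_zpow_right₀ (by norm_num) (by omega)
      simpa using this
    nlinarith
  -- greatest selected ancestor scale
  obtain ⟨K, ⟨nK, hsubK, hselK⟩, hKmax⟩ := Int.exists_greatest_of_bdd
    (P := fun k' => ∃ n', DI k n ⊆ DI k' n' ∧ Sel g k' n')
    ⟨N, fun z ⟨n', _, hs⟩ => hscale_bd z n' hs⟩
    ⟨k, n, subset_rfl, h⟩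
  refine ⟨K, nK, ?_, hsubK, hselK, ?_⟩
  · exact hKmax k ⟨n, subset_rfl, h⟩
  · intro k' n' hlt hsub hs
    have : k' ≤ K := hKmax k' ⟨n', hsubK.trans hsub, hs⟩
    omega

lemma maxSel_disjoint {g : ℝ → ℝ} :
    ∀ p q : ℤ × ℤ, MaxSel g p.1 p.2 → MaxSel g q.1 q.2 → p ≠ q →
      Disjoint (DI p.1 p.2) (DI q.1 q.2) := by
  have main : ∀ p q : ℤ × ℤ, p.1 ≤ q.1 → MaxSel g p.1 p.2 → MaxSel g q.1 q.2 → p ≠ q →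
      Disjoint (DI p.1 p.2) (DI q.1 q.2) := by
    rintro ⟨k, n⟩ ⟨k', n'⟩ hle h1 h2 hne
    rw [Set.disjoint_iff_inter_eq_empty]
    by_contra hne'
    have hnon : (DI k n ∩ DI k' n').Nonempty := nonempty_iff_ne_empty.2 hne'
    have hsub := DI_subset hle hnon
    rcases lt_or_eq_of_le hle with hlt | heq
    · exact h1.2 k' n' hlt hsub h2.1
    · subst heq
      have : n = n' := by
        obtain ⟨x, hx1, hx2⟩ := hnon
        rw [mem_DI] at hx1 hx2
        exact hx1.symm.trans hx2
      exact hne (by simp [this])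
  intro p q h1 h2 hne
  rcases le_total p.1 q.1 with h | h
  · exact main p q h h1 h2 hne
  · exact (main q p h h2 h1 (Ne.symm hne)).symm

set_option maxHeartbeats 1000000 in
lemma cover {g : ℝ → ℝ} (hg : Integrable g) (hg0 : 0 ≤ᶠ[ae volume] g)
    {x y : ℝ} (hxy : x < y)
    (h2 : (y-x)^2 ≤ ∫ t in Set.Ioc x y, g t) :
    ∃ k n : ℤ, MaxSel g k n ∧ Set.Icc x y ⊆ Set.Icc ((n-2)*(2:ℝ)^k) ((n+3)*(2:ℝ)^k) := by
  have hr : 0 < y - x := by linarith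
  obtain ⟨k₀, hk₀⟩ := exists_mem_Ioc_zpow hr (by norm_num : (1:ℝ) < 2)
  obtain ⟨hk₀1, hk₀2⟩ := hk₀
  set k : ℤ := k₀ + 1 with hk
  have hA : (0:ℝ) < 2^k := zpow_pos (by norm_num) k
  have hlow : (2:ℝ)^k / 2 < y - x := by
    have he : (2:ℝ)^k₀ = 2^k / 2 := by
      rw [hk, zpow_add₀ (by norm_num : (2:ℝ) ≠ 0)]; ring
    rw [← he]; exact hk₀1
  have hhigh : y - x ≤ 2^k := hk₀2
  set m : ℤ := ⌊x / (2:ℝ)^k⌋ with hm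
  have hxm : x ∈ DI k m := mem_DI.2 rfl
  obtain ⟨hxm1, hxm2⟩ := hxm
  have hxm2' : x < ((m:ℝ)+1) * 2^k := by push_cast at hxm2; linarith
  have hy2 : y < ((m:ℝ)+2) * 2^k := by nlinarith
  have e1 : ((m+1 : ℤ):ℝ) * 2^k = ((m:ℝ)+1)*2^k := by push_cast; ring
  have e2 : (((m+1 : ℤ):ℝ)+1) * 2^k = ((m:ℝ)+2)*2^k := by push_cast; ring
  have hunion : DI k m ∪ DI k (m+1) = Set.Ico ((m:ℝ)*2^k) (((m:ℝ)+2)*2^k) := by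
    rw [DI, DI, e1, e2, Set.Ico_union_Ico_eq_Ico] <;> nlinarith
  have hsubIoc : Set.Ioc x y ⊆ DI k m ∪ DI k (m+1) := by
    rw [hunion]
    intro z hz
    exact ⟨le_trans hxm1 hz.1.le, lt_of_le_of_lt hz.2 hy2⟩
  have hdisj : Disjoint (DI k m) (DI k (m+1)) := by
    rw [Set.disjoint_left]
    rintro a ⟨_, ha2⟩ ⟨ha3, _⟩
    rw [e1] at ha3
    exact absurd ha2 (not_lt.2 ha3)
  have hint : ∫ t in Set.Ioc x y, g t ≤ (∫ t in DI k m, g t) + ∫ t in DI k (m+1), g t := by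
    have h1 : ∫ t in Set.Ioc x y, g t ≤ ∫ t in DI k m ∪ DI k (m+1), g t :=
      setIntegral_mono_set (hg.integrableOn) (ae_restrict_of_ae hg0)
        (Filter.Eventually.of_forall hsubIoc)
    have h2' : ∫ t in DI k m ∪ DI k (m+1), g t
        = (∫ t in DI k m, g t) + ∫ t in DI k (m+1), g t :=
      setIntegral_union hdisj measurableSet_Ico hg.integrableOn hg.integrableOn
    linarith
  have hquarter : ((2:ℝ)^k)^2 / 4 < (∫ t in DI k m, g t) + ∫ t in DI k (m+1), g t := by
    nlinarith
  have hsel : ∃ n : ℤ, (n = m ∨ n = m + 1) ∧ Sel g k n := by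
    by_cases hc : Sel g k m
    · exact ⟨m, Or.inl rfl, hc⟩
    · refine ⟨m+1, Or.inr rfl, ?_⟩
      rw [Sel] at hc ⊢
      push_neg at hc
      linarith
  obtain ⟨n, hn, hseln⟩ := hsel
  obtain ⟨k', n', hkk', hsub, hmax⟩ := exists_maxSel hg hg0 hseln
  refine ⟨k', n', hmax, ?_⟩
  have hA' : (0:ℝ) < 2^k' := zpow_pos (by norm_num) k'
  have hAA' : (2:ℝ)^k ≤ 2^k' := zpow_le_zpow_right₀ (by norm_num) hkk'
  have hnm : (m:ℝ) ≤ (n:ℝ) ∧ (n:ℝ) ≤ (m:ℝ)+1 := by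
    rcases hn with h | h <;> subst h <;> constructor <;> push_cast <;> linarith
  have hwDI : (n:ℝ) * 2^k ∈ DI k n := ⟨le_refl _, by push_cast; nlinarith⟩
  obtain ⟨hw1, hw2⟩ := hsub hwDI
  have hw2' : (n:ℝ)*2^k < ((n':ℝ)+1) * 2^k' := by push_cast at hw2; linarith
  intro z hz
  have hz1 : (m:ℝ)*2^k ≤ z := le_trans hxm1 hz.1
  have hz2 : z ≤ ((m:ℝ)+2)*2^k := le_trans hz.2 hy2.le
  have hwm1 : (m:ℝ)*2^k ≤ (n:ℝ)*2^k := by nlinarith [hnm.1]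
  have hwm2 : (n:ℝ)*2^k ≤ ((m:ℝ)+1)*2^k := by nlinarith [hnm.2]
  rw [add_mul] at hw2'
  refine Set.mem_Icc.mpr ⟨?_, ?_⟩
  · rw [sub_mul]; linarith
  · rw [add_mul]; linarith

lemma DI_measurable (k n : ℤ) : MeasurableSet (DI k n) := measurableSet_Ico

lemma diag_null : (volume : Measure (ℝ×ℝ)) {q : ℝ×ℝ | q.1 = q.2} = 0 := by
  rw [MeasureTheory.Measure.volume_eq_prod, Measure.prod_apply
      (measurableSet_eq_fun measurable_fst measurable_snd)]
  have h : ∀ x : ℝ, (volume (Prod.mk x ⁻¹' {q : ℝ×ℝ | q.1 = q.2})) = 0 := by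
    intro x
    have h' : (Prod.mk x ⁻¹' {q : ℝ×ℝ | q.1 = q.2}) = {x} := by
      ext y; simp [eq_comm]
    rw [h']; simp
  simp [h]

lemma measure_bound (g : ℝ → ℝ) (hg : Integrable g) (hg0 : ∀ t, 0 ≤ g t)
    (E : Set (ℝ×ℝ)) (hsym : ∀ x y : ℝ, (x,y) ∈ E → (y,x) ∈ E)
    (hE : ∀ x y : ℝ, (x,y) ∈ E → x < y → (y-x)^2 ≤ ∫ t in Set.Ioc x y, g t) :
    volume E ≤ ENNReal.ofReal (200 * ∫ t, g t) := by
  have hg0' : 0 ≤ᶠ[ae volume] g := Filter.Eventually.of_forall hg0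
  set ι := {p : ℤ × ℤ // MaxSel g p.1 p.2} with hι
  set Q : ι → Set (ℝ×ℝ) := fun i =>
    (Set.Icc (((i.1.2:ℝ)-2)*(2:ℝ)^i.1.1) (((i.1.2:ℝ)+3)*(2:ℝ)^i.1.1)) ×ˢ
    (Set.Icc (((i.1.2:ℝ)-2)*(2:ℝ)^i.1.1) (((i.1.2:ℝ)+3)*(2:ℝ)^i.1.1)) with hQ
  have hcover : E ⊆ {q : ℝ×ℝ | q.1 = q.2} ∪ ⋃ i, Q i := by
    rintro ⟨x, y⟩ hxy
    rcases lt_trichotomy x y with h | h | h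
    · obtain ⟨k, n, hmax, hsubset⟩ := cover hg hg0' h (hE x y hxy h)
      refine Or.inr (Set.mem_iUnion.2 ⟨⟨(k, n), hmax⟩, ?_⟩)
      exact ⟨hsubset ⟨le_refl x, h.le⟩, hsubset ⟨h.le, le_refl y⟩⟩
    · exact Or.inl h
    · obtain ⟨k, n, hmax, hsubset⟩ := cover hg hg0' h (hE y x (hsym x y hxy) h)
      refine Or.inr (Set.mem_iUnion.2 ⟨⟨(k, n), hmax⟩, ?_⟩)
      exact ⟨hsubset ⟨h.le, le_refl x⟩, hsubset ⟨le_refl y, h.le⟩⟩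
  calc volume E ≤ volume ({q : ℝ×ℝ | q.1 = q.2} ∪ ⋃ i, Q i) := measure_mono hcover
    _ ≤ volume {q : ℝ×ℝ | q.1 = q.2} + volume (⋃ i, Q i) := measure_union_le _ _
    _ = volume (⋃ i, Q i) := by rw [diag_null, zero_add]
    _ ≤ ∑' i : ι, volume (Q i) := measure_iUnion_le _
    _ ≤ ∑' i : ι, ENNReal.ofReal 200 * ∫⁻ t in DI i.1.1 i.1.2, ENNReal.ofReal (g t) := by
        refine ENNReal.tsum_le_tsum fun i => ?_
        obtain ⟨⟨k, n⟩, hmax⟩ := i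
        have hA : (0:ℝ) < 2^k := zpow_pos (by norm_num) k
        have hvol : volume (Q ⟨(k,n), hmax⟩) = ENNReal.ofReal (25 * ((2:ℝ)^k)^2) := by
          rw [hQ]
          simp only [MeasureTheory.Measure.volume_eq_prod]
          rw [Measure.prod_prod, Real.volume_Icc]
          rw [show ((n:ℝ)+3)*2^k - ((n:ℝ)-2)*2^k = 5 * 2^k from by ring]
          rw [← ENNReal.ofReal_mul (by positivity)]
          congr 1; ring
        rw [hvol]
        have hsel := hmax.1
        rw [Sel] at hsel
        have hofreal : ENNReal.ofReal (∫ t in DI k n, g t)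
            = ∫⁻ t in DI k n, ENNReal.ofReal (g t) :=
          ofReal_integral_eq_lintegral_ofReal hg.integrableOn
            (ae_restrict_of_ae hg0')
        calc ENNReal.ofReal (25 * ((2:ℝ)^k)^2)
            = ENNReal.ofReal (200 * (((2:ℝ)^k)^2 / 8)) := by congr 1; ring
          _ = ENNReal.ofReal 200 * ENNReal.ofReal (((2:ℝ)^k)^2 / 8) := by
              rw [ENNReal.ofReal_mul (by norm_num)]
          _ ≤ ENNReal.ofReal 200 * ENNReal.ofReal (∫ t in DI k n, g t) := by
              gcongr
          _ = ENNReal.ofReal 200 * ∫⁻ t in DI k n, ENNReal.ofReal (g t) := by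
              rw [hofreal]
    _ = ENNReal.ofReal 200 * ∑' i : ι, ∫⁻ t in DI i.1.1 i.1.2, ENNReal.ofReal (g t) :=
        ENNReal.tsum_mul_left
    _ = ENNReal.ofReal 200 * ∫⁻ t in ⋃ i : ι, DI i.1.1 i.1.2, ENNReal.ofReal (g t) := by
        congr 1
        exact (lintegral_iUnion (fun i => DI_measurable _ _)
          (fun i j hij => maxSel_disjoint i.1 j.1 i.2 j.2 (fun h => hij (Subtype.ext h)))
          _).symm
    _ ≤ ENNReal.ofReal 200 * ∫⁻ t, ENNReal.ofReal (g t) := by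
        gcongr
        exact Measure.restrict_le_self
    _ = ENNReal.ofReal 200 * ENNReal.ofReal (∫ t, g t) := by
        rw [ofReal_integral_eq_lintegral_ofReal hg hg0']
    _ = ENNReal.ofReal (200 * ∫ t, g t) := by
        rw [← ENNReal.ofReal_mul (by norm_num)]

end DyadicCZ

/-- There is a universal constant `C` such that for every `u ∈ C¹_c(ℝ)`, the planar Lebesgue
measure of `{(x,y) : |u(x) - u(y)| ≥ |x - y|²}` is at most `C ∫_ℝ |u'|`. -/
theorem measure_set_le_of_C1c :
    ∃ C : ℝ, 0 < C ∧ ∀ u : ℝ → ℝ, ContDiff ℝ 1 u → HasCompactSupport u →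
      volume {q : ℝ × ℝ | |u q.1 - u q.2| ≥ |q.1 - q.2| ^ 2}
        ≤ ENNReal.ofReal (C * ∫ t, |deriv u t|) := by
  refine ⟨200, by norm_num, fun u hu hc => ?_⟩
  have hgcont : Continuous (fun t => |deriv u t|) := (hu.continuous_deriv le_rfl).abs
  have hgsupp : HasCompactSupport (fun t => |deriv u t|) :=
    (hc.deriv).comp_left (g := fun r : ℝ => |r|) abs_zero
  have hg : Integrable (fun t => |deriv u t|) :=
    hgcont.integrable_of_hasCompactSupport hgsupp
  apply measure_bound _ hg (fun t => abs_nonneg _)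
  · intro x y h
    simp only [Set.mem_setOf_eq] at h ⊢
    rwa [abs_sub_comm (u y), abs_sub_comm y x]
  · intro x y hmem hxy
    simp only [Set.mem_setOf_eq] at hmem
    have hftc : ∫ t in x..y, deriv u t = u y - u x :=
      intervalIntegral.integral_deriv_eq_sub
        (fun t _ => (hu.differentiable one_ne_zero).differentiableAt)
        ((hu.continuous_deriv le_rfl).intervalIntegrable x y)
    have h1 : (y-x)^2 = |x - y|^2 := by
      rw [sq_abs]; ring
    have h2 : |u x - u y| = |∫ t in x..y, deriv u t| := by
      rw [hftc, abs_sub_comm]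
    have h3 : |∫ t in x..y, deriv u t| ≤ ∫ t in x..y, |deriv u t| :=
      intervalIntegral.abs_integral_le_integral_abs hxy.le
    have h4 : ∫ t in x..y, |deriv u t| = ∫ t in Set.Ioc x y, |deriv u t| :=
      intervalIntegral.integral_of_le hxy.le
    calc (y-x)^2 = |x-y|^2 := h1
      _ ≤ |u x - u y| := hmem
      _ = |∫ t in x..y, deriv u t| := h2
      _ ≤ ∫ t in x..y, |deriv u t| := h3
      _ = ∫ t in Set.Ioc x y, |deriv u t| := h4
end

section
/- Let γ > 0 and let f : ℝ → ℝ be continuous, compactly supported, and nonnegative. Define E(f,γ) = {(x,y) ∈ ℝ² : x ≠ y and |∫_y^x f| ≥ |x-y|^{γ+1}}. Then ∬_{E(f,γ)} |x-y|^{γ-1} dx dy ≤ C · (5^γ/γ) · ∫_ℝ f, where C is a universal constant independent of γ and f. -/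
open MeasureTheory Set Metric
open scoped ENNReal

private lemma my_lintegral_neg_eq_self (f : ℝ → ℝ≥0∞) :
    ∫⁻ x, f (-x) = ∫⁻ x, f x := by
  have h := lintegral_map_equiv (μ := (volume : Measure ℝ)) f (Homeomorph.neg ℝ).toMeasurableEquiv
  have h2 : Measure.map (Homeomorph.neg ℝ).toMeasurableEquiv (volume : Measure ℝ) = volume := by
    have : ⇑(Homeomorph.neg ℝ).toMeasurableEquiv = fun x : ℝ => -x := rfl
    rw [this]
    exact Measure.map_neg_eq_self _
  rw [h2] at h
  exact h.symm

private lemma my_core (γ L : ℝ) (hγ : 0 < γ) (hL : 0 ≤ L) :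
    ∫⁻ s in Set.Icc (0:ℝ) L, ENNReal.ofReal (s ^ (γ - 1)) = ENNReal.ofReal (L ^ γ / γ) := by
  have hγ1 : (-1:ℝ) < γ - 1 := by linarith
  rw [← setLIntegral_congr (Ioc_ae_eq_Icc (μ := (volume : Measure ℝ)) (a := (0:ℝ)) (b := L))]
  have hint : IntegrableOn (fun s : ℝ => s ^ (γ - 1)) (Ioc 0 L) volume := by
    have h := intervalIntegral.intervalIntegrable_rpow' (a := (0:ℝ)) (b := L) hγ1
    exact h.1
  have hnn : 0 ≤ᵐ[volume.restrict (Ioc (0:ℝ) L)] fun s : ℝ => s ^ (γ - 1) := by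
    refine (ae_restrict_iff' measurableSet_Ioc).2 (Filter.Eventually.of_forall fun s hs => ?_)
    exact Real.rpow_nonneg hs.1.le _
  rw [← ofReal_integral_eq_lintegral_ofReal hint hnn]
  congr 1
  have : ∫ s in Ioc (0:ℝ) L, s ^ (γ - 1) = ∫ s in (0:ℝ)..L, s ^ (γ - 1) := by
    rw [intervalIntegral.integral_of_le hL]
  rw [this, integral_rpow (Or.inl hγ1)]
  rw [show γ - 1 + 1 = γ by ring, Real.zero_rpow hγ.ne']
  ring

private lemma my_sym (γ L : ℝ) (hγ : 0 < γ) (hL : 0 ≤ L) :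
    ∫⁻ s in Set.Icc (-L) L, ENNReal.ofReal (|s| ^ (γ - 1))
      ≤ ENNReal.ofReal (2 * (L ^ γ / γ)) := by
  have hpos : ∫⁻ s in Set.Icc (0:ℝ) L, ENNReal.ofReal (|s| ^ (γ - 1))
      = ENNReal.ofReal (L ^ γ / γ) := by
    rw [← my_core γ L hγ hL]
    refine setLIntegral_congr_fun measurableSet_Icc
      (fun s hs => ?_)
    rw [abs_of_nonneg hs.1]
  have hneg : ∫⁻ s in Set.Icc (-L) (0:ℝ), ENNReal.ofReal (|s| ^ (γ - 1))
      = ENNReal.ofReal (L ^ γ / γ) := by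
    rw [← hpos]
    rw [← lintegral_indicator measurableSet_Icc, ← lintegral_indicator measurableSet_Icc]
    have : ∀ x : ℝ, (Icc (-L) (0:ℝ)).indicator (fun s => ENNReal.ofReal (|s| ^ (γ - 1))) x
        = (Icc (0:ℝ) L).indicator (fun s => ENNReal.ofReal (|s| ^ (γ - 1))) (-x) := by
      intro x
      by_cases hx : x ∈ Icc (-L) (0:ℝ)
      · have hx' : -x ∈ Icc (0:ℝ) L := ⟨by linarith [hx.2], by linarith [hx.1]⟩
        rw [Set.indicator_of_mem hx, Set.indicator_of_mem hx', abs_neg]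
      · have hx' : -x ∉ Icc (0:ℝ) L := by
          intro h
          exact hx ⟨by linarith [h.2], by linarith [h.1]⟩
        rw [Set.indicator_of_notMem hx, Set.indicator_of_notMem hx']
    simp_rw [this]
    exact my_lintegral_neg_eq_self _
  calc ∫⁻ s in Set.Icc (-L) L, ENNReal.ofReal (|s| ^ (γ - 1))
      ≤ ∫⁻ s in Set.Icc (-L) (0:ℝ) ∪ Set.Icc (0:ℝ) L,
          ENNReal.ofReal (|s| ^ (γ - 1)) := by
        refine lintegral_mono_set fun s hs => ?_
        rcases le_total s 0 with h | h
        · exact Or.inl ⟨hs.1, h⟩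
        · exact Or.inr ⟨h, hs.2⟩
    _ ≤ (∫⁻ s in Set.Icc (-L) (0:ℝ), ENNReal.ofReal (|s| ^ (γ - 1)))
        + ∫⁻ s in Set.Icc (0:ℝ) L, ENNReal.ofReal (|s| ^ (γ - 1)) :=
        lintegral_union_le _ _ _
    _ = ENNReal.ofReal (L ^ γ / γ) + ENNReal.ofReal (L ^ γ / γ) := by rw [hpos, hneg]
    _ = ENNReal.ofReal (2 * (L ^ γ / γ)) := by
        rw [← ENNReal.ofReal_add (by positivity) (by positivity)]
        congr 1; ring

private lemma my_transl (γ L x : ℝ) (hγ : 0 < γ) (hL : 0 ≤ L) :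
    ∫⁻ y in Set.Icc (x - L) (x + L), ENNReal.ofReal (|x - y| ^ (γ - 1))
      ≤ ENNReal.ofReal (2 * (L ^ γ / γ)) := by
  rw [← lintegral_indicator measurableSet_Icc]
  have : ∀ y : ℝ, (Icc (x - L) (x + L)).indicator
        (fun y => ENNReal.ofReal (|x - y| ^ (γ - 1))) y
      = (Icc (-L) L).indicator (fun s => ENNReal.ofReal (|s| ^ (γ - 1))) (y - x) := by
    intro y
    by_cases hy : y ∈ Icc (x - L) (x + L)
    · have hy' : y - x ∈ Icc (-L) L := ⟨by linarith [hy.1], by linarith [hy.2]⟩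
      rw [Set.indicator_of_mem hy, Set.indicator_of_mem hy', abs_sub_comm]
    · have hy' : y - x ∉ Icc (-L) L := by
        intro h
        exact hy ⟨by linarith [h.1], by linarith [h.2]⟩
      rw [Set.indicator_of_notMem hy, Set.indicator_of_notMem hy']
  simp_rw [this]
  rw [lintegral_sub_right_eq_self
    (fun s => (Icc (-L) L).indicator (fun s => ENNReal.ofReal (|s| ^ (γ - 1))) s) x]
  rw [lintegral_indicator measurableSet_Icc]
  exact my_sym γ L hγ hL

private lemma my_square (γ c ρ : ℝ) (hγ : 0 < γ) (hρ : 0 ≤ ρ) :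
    ∫⁻ q in (closedBall c ρ) ×ˢ (closedBall c ρ),
        ENNReal.ofReal (|q.1 - q.2| ^ (γ - 1))
      ≤ ENNReal.ofReal (2 * ρ) * ENNReal.ofReal (2 * ((2 * ρ) ^ γ / γ)) := by
  have hmeas : Measurable fun q : ℝ × ℝ => ENNReal.ofReal (|q.1 - q.2| ^ (γ - 1)) :=
    ENNReal.measurable_ofReal.comp
      (((measurable_fst.sub measurable_snd).abs).pow measurable_const)
  have hrw : (volume : Measure (ℝ × ℝ)).restrict (closedBall c ρ ×ˢ closedBall c ρ)
      = (volume.restrict (closedBall c ρ)).prod (volume.restrict (closedBall c ρ)) := by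
    rw [Measure.prod_restrict, ← Measure.volume_eq_prod]
  rw [hrw, lintegral_prod _ hmeas.aemeasurable]
  calc ∫⁻ x in closedBall c ρ, ∫⁻ y in closedBall c ρ,
        ENNReal.ofReal (|x - y| ^ (γ - 1))
      ≤ ∫⁻ _ in closedBall c ρ, ENNReal.ofReal (2 * ((2 * ρ) ^ γ / γ)) := by
        refine setLIntegral_mono' measurableSet_closedBall fun x hx => ?_
        have hx' : |x - c| ≤ ρ := by
          rw [mem_closedBall, Real.dist_eq] at hx; exact hx
        have hsub : closedBall c ρ ⊆ Set.Icc (x - 2 * ρ) (x + 2 * ρ) := by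
          intro y hy
          rw [mem_closedBall, Real.dist_eq] at hy
          have h1 : -ρ ≤ y - c := by cases abs_le.1 hy; assumption
          have h2 : y - c ≤ ρ := by cases abs_le.1 hy; assumption
          have h3 : -ρ ≤ x - c := by cases abs_le.1 hx'; assumption
          have h4 : x - c ≤ ρ := by cases abs_le.1 hx'; assumption
          exact ⟨by linarith, by linarith⟩
        calc ∫⁻ y in closedBall c ρ, ENNReal.ofReal (|x - y| ^ (γ - 1))
            ≤ ∫⁻ y in Set.Icc (x - 2 * ρ) (x + 2 * ρ),
                ENNReal.ofReal (|x - y| ^ (γ - 1)) := lintegral_mono_set hsub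
          _ ≤ ENNReal.ofReal (2 * ((2 * ρ) ^ γ / γ)) :=
              my_transl γ (2 * ρ) x hγ (by linarith)
    _ = ENNReal.ofReal (2 * ρ) * ENNReal.ofReal (2 * ((2 * ρ) ^ γ / γ)) := by
        rw [setLIntegral_const, Real.volume_closedBall, mul_comm]

/-- Proposition 2.1: for `γ > 0` and nonnegative `f ∈ C_c(ℝ)`,
`∬_{E(f,γ)} |x-y|^{γ-1} dx dy ≤ C (5^γ/γ) ∫ f` with `C` universal. -/
theorem weighted_measure_bound_one_dim :
    ∃ C : ℝ, 0 < C ∧ ∀ γ : ℝ, 0 < γ → ∀ f : ℝ → ℝ, Continuous f → HasCompactSupport f →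
      (∀ t, 0 ≤ f t) →
      ∫⁻ q in {q : ℝ × ℝ | q.1 ≠ q.2 ∧ |∫ t in q.2..q.1, f t| ≥ |q.1 - q.2| ^ (γ + 1)},
          ENNReal.ofReal (|q.1 - q.2| ^ (γ - 1))
        ≤ ENNReal.ofReal (C * (5 ^ γ / γ) * ∫ t, f t) := by
  refine ⟨10, by norm_num, ?_⟩
  intro γ hγ f hf hsupp hpos
  set E : Set (ℝ × ℝ) :=
    {q : ℝ × ℝ | q.1 ≠ q.2 ∧ |∫ t in q.2..q.1, f t| ≥ |q.1 - q.2| ^ (γ + 1)} with hE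
  have hfi : Integrable f := hf.integrable_of_hasCompactSupport hsupp
  set F : ℝ := ∫ t, f t with hFdef
  have hF0 : 0 ≤ F := integral_nonneg hpos
  -- basic facts about points of E
  have key : ∀ p : ℝ × ℝ, p ∈ E →
      |p.1 - p.2| ^ (γ + 1) ≤ ∫ t in uIoc p.2 p.1, f t ∧ (0:ℝ) < |p.1 - p.2| := by
    intro p hp
    obtain ⟨hne, hI⟩ := hp
    have habs : |∫ t in p.2..p.1, f t| = ∫ t in uIoc p.2 p.1, f t := by
      rw [intervalIntegral.intervalIntegral_eq_integral_uIoc]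
      have hnn : 0 ≤ ∫ t in uIoc p.2 p.1, f t :=
        setIntegral_nonneg measurableSet_uIoc fun t _ => hpos t
      split_ifs <;> simp [abs_of_nonneg hnn]
    exact ⟨habs ▸ hI, abs_pos.2 (sub_ne_zero.2 hne)⟩
  have keyF : ∀ p ∈ E, |p.1 - p.2| ^ (γ + 1) ≤ F := by
    intro p hp
    exact (key p hp).1.trans (setIntegral_le_integral hfi (Filter.Eventually.of_forall hpos))
  by_cases hF : F = 0
  · have hEempty : E = ∅ := by
      refine eq_empty_iff_forall_notMem.2 fun p hp => ?_
      have h1 := keyF p hp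
      have h2 : (0:ℝ) < |p.1 - p.2| ^ (γ + 1) :=
        Real.rpow_pos_of_pos (key p hp).2 _
      rw [hF] at h1; linarith
    rw [hEempty]
    simp
  · have hFpos : 0 < F := lt_of_le_of_ne hF0 (Ne.symm hF)
    set M : ℝ := F ^ (γ + 1)⁻¹ with hM
    have hrad : ∀ p ∈ E, |p.1 - p.2| ≤ M := by
      intro p hp
      have h := keyF p hp
      have h2 : (|p.1 - p.2| ^ (γ + 1)) ^ (γ + 1)⁻¹ ≤ F ^ (γ + 1)⁻¹ :=
        Real.rpow_le_rpow (Real.rpow_nonneg (abs_nonneg _) _) h (by positivity)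
      rwa [Real.rpow_rpow_inv (abs_nonneg _) (by positivity)] at h2
    obtain ⟨u, huE, hdisj, hcover⟩ :=
      Vitali.exists_disjoint_subfamily_covering_enlargement_closedBall E
        (fun p : ℝ × ℝ => (p.1 + p.2) / 2) (fun p : ℝ × ℝ => |p.1 - p.2| / 2) (M / 2)
        (fun p hp => by linarith [hrad p hp]) 5 (by norm_num)
    have hball : ∀ p : ℝ × ℝ,
        closedBall ((p.1 + p.2) / 2) (|p.1 - p.2| / 2) = uIcc p.1 p.2 := by
      intro p
      rw [Real.closedBall_eq_Icc]
      rcases le_total p.1 p.2 with h | h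
      · rw [uIcc_of_le h, abs_of_nonpos (by linarith : p.1 - p.2 ≤ 0)]
        congr 1 <;> ring
      · rw [uIcc_of_ge h, abs_of_nonneg (by linarith : (0:ℝ) ≤ p.1 - p.2)]
        congr 1 <;> ring
    have hucnt : u.Countable := by
      refine hdisj.countable_of_nonempty_interior fun p hp => ?_
      have hr : 0 < |p.1 - p.2| / 2 := by
        have := abs_pos.2 (sub_ne_zero.2 (huE hp).1); linarith
      exact ⟨_, ball_subset_interior_closedBall (mem_ball_self hr)⟩
    haveI := hucnt.to_subtype
    set J : ℝ × ℝ → Set ℝ :=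
      fun p => closedBall ((p.1 + p.2) / 2) (5 * (|p.1 - p.2| / 2)) with hJ
    have hsub : E ⊆ ⋃ b : u, (J b ×ˢ J b) := by
      intro p hp
      obtain ⟨b, hb, hbsub⟩ := hcover p hp
      have h1 : p.1 ∈ closedBall ((p.1 + p.2) / 2) (|p.1 - p.2| / 2) := by
        rw [hball]; exact left_mem_uIcc
      have h2 : p.2 ∈ closedBall ((p.1 + p.2) / 2) (|p.1 - p.2| / 2) := by
        rw [hball]; exact right_mem_uIcc
      exact Set.mem_iUnion.2 ⟨⟨b, hb⟩, hbsub h1, hbsub h2⟩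
    set K : ℝ≥0∞ := ENNReal.ofReal (2 * 5 ^ (γ + 1) / γ) with hK
    have perball : ∀ b : u, ∫⁻ q in J b ×ˢ J b, ENNReal.ofReal (|q.1 - q.2| ^ (γ - 1))
        ≤ K * ∫⁻ t in uIcc (b : ℝ × ℝ).1 (b : ℝ × ℝ).2, ENNReal.ofReal (f t) := by
      intro b
      set p : ℝ × ℝ := (b : ℝ × ℝ)
      have hpE : p ∈ E := huE b.2
      set d : ℝ := |p.1 - p.2| with hd
      have hd0 : 0 < d := (key p hpE).2
      have step1 : ∫⁻ q in J p ×ˢ J p, ENNReal.ofReal (|q.1 - q.2| ^ (γ - 1))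
          ≤ ENNReal.ofReal (2 * (5 * (d / 2)))
            * ENNReal.ofReal (2 * ((2 * (5 * (d / 2))) ^ γ / γ)) :=
        my_square γ _ _ hγ (by positivity)
      have harith : ENNReal.ofReal (2 * (5 * (d / 2)))
            * ENNReal.ofReal (2 * ((2 * (5 * (d / 2))) ^ γ / γ))
          = K * ENNReal.ofReal (d ^ (γ + 1)) := by
        rw [← ENNReal.ofReal_mul (by positivity), hK,
          ← ENNReal.ofReal_mul (by positivity)]
        congr 1
        have h5d : (2 * (5 * (d / 2))) = 5 * d := by ring
        rw [h5d, Real.mul_rpow (by norm_num) hd0.le,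
          Real.rpow_add_one (by norm_num : (5:ℝ) ≠ 0),
          Real.rpow_add_one hd0.ne']
        field_simp
      have step2 : ENNReal.ofReal (d ^ (γ + 1))
          ≤ ∫⁻ t in uIcc p.1 p.2, ENNReal.ofReal (f t) := by
        have h1 : d ^ (γ + 1) ≤ ∫ t in uIoc p.2 p.1, f t := (key p hpE).1
        have h2 : ENNReal.ofReal (∫ t in uIoc p.2 p.1, f t)
            = ∫⁻ t in uIoc p.2 p.1, ENNReal.ofReal (f t) :=
          ofReal_integral_eq_lintegral_ofReal hfi.integrableOn
            (Filter.Eventually.of_forall hpos)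
        calc ENNReal.ofReal (d ^ (γ + 1))
            ≤ ENNReal.ofReal (∫ t in uIoc p.2 p.1, f t) := ENNReal.ofReal_le_ofReal h1
          _ = ∫⁻ t in uIoc p.2 p.1, ENNReal.ofReal (f t) := h2
          _ ≤ ∫⁻ t in uIcc p.2 p.1, ENNReal.ofReal (f t) :=
              lintegral_mono_set uIoc_subset_uIcc
          _ = ∫⁻ t in uIcc p.1 p.2, ENNReal.ofReal (f t) := by rw [uIcc_comm]
      calc ∫⁻ q in J p ×ˢ J p, ENNReal.ofReal (|q.1 - q.2| ^ (γ - 1))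
          ≤ ENNReal.ofReal (2 * (5 * (d / 2)))
            * ENNReal.ofReal (2 * ((2 * (5 * (d / 2))) ^ γ / γ)) := step1
        _ = K * ENNReal.ofReal (d ^ (γ + 1)) := harith
        _ ≤ K * ∫⁻ t in uIcc p.1 p.2, ENNReal.ofReal (f t) :=
            mul_le_mul_right step2 _
    have hsum : ∑' b : u, ∫⁻ t in uIcc (b : ℝ × ℝ).1 (b : ℝ × ℝ).2, ENNReal.ofReal (f t)
        ≤ ∫⁻ t, ENNReal.ofReal (f t) := by
      have hpw : Pairwise (Function.onFun Disjoint
          fun b : u => uIcc (b : ℝ × ℝ).1 (b : ℝ × ℝ).2) := by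
        intro i j hij
        have hne : (i : ℝ × ℝ) ≠ (j : ℝ × ℝ) := Subtype.coe_ne_coe.mpr hij
        have h2 := hdisj i.2 j.2 hne
        simpa only [Function.onFun, hball] using h2
      rw [← lintegral_iUnion (fun b => measurableSet_uIcc) hpw]
      exact setLIntegral_le_lintegral _ _
    have hFint : ∫⁻ t, ENNReal.ofReal (f t) = ENNReal.ofReal F :=
      (ofReal_integral_eq_lintegral_ofReal hfi (Filter.Eventually.of_forall hpos)).symm
    calc ∫⁻ q in E, ENNReal.ofReal (|q.1 - q.2| ^ (γ - 1))
        ≤ ∫⁻ q in ⋃ b : u, (J b ×ˢ J b), ENNReal.ofReal (|q.1 - q.2| ^ (γ - 1)) :=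
          lintegral_mono_set hsub
      _ ≤ ∑' b : u, ∫⁻ q in J b ×ˢ J b, ENNReal.ofReal (|q.1 - q.2| ^ (γ - 1)) :=
          lintegral_iUnion_le _ _
      _ ≤ ∑' b : u, K * ∫⁻ t in uIcc (b : ℝ × ℝ).1 (b : ℝ × ℝ).2, ENNReal.ofReal (f t) :=
          ENNReal.tsum_le_tsum perball
      _ = K * ∑' b : u, ∫⁻ t in uIcc (b : ℝ × ℝ).1 (b : ℝ × ℝ).2, ENNReal.ofReal (f t) :=
          ENNReal.tsum_mul_left
      _ ≤ K * ∫⁻ t, ENNReal.ofReal (f t) := mul_le_mul_right hsum _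
      _ = K * ENNReal.ofReal F := by rw [hFint]
      _ ≤ ENNReal.ofReal (10 * (5 ^ γ / γ) * F) := by
          rw [hK, ← ENNReal.ofReal_mul (by positivity)]
          apply ENNReal.ofReal_le_ofReal
          apply le_of_eq
          rw [Real.rpow_add_one (by norm_num : (5:ℝ) ≠ 0)]
          ring
end
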